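/- Let b_min > 0 and suppose 0 < v₀ and v₀²/(2·b_min) ≤ y_tgt − y₀. Consider first the cruising phase y' = v₀ (constant speed) until y reaches y_tgt − v₀²/(2·b_min), then the braking phase y' = v, v' = −b_min until v = 0. Then the vehicle stops exactly at y = y_tgt, the total position never exceeds y_tgt, and v stays in [0, v₀] throughout. -/

import Mathlib

open Set

/-- Correctness of the cruise-then-brake proper response: under the
stopping-distance precondition `v₀²/(2 bmin) ≤ ytgt − y₀`, cruising at speed `v₀`
until the switching time `T₁` and then braking at `bmin` until the stopping time
`T₂` stops exactly at `ytgt`, never exceeds `ytgt`, and keeps `v ∈ [0, v₀]`. -/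
theorem stmt8 (bmin ytgt y0 v0 : ℝ) (hb : 0 < bmin) (hv : 0 < v0)
    (hpre : v0 ^ 2 / (2 * bmin) ≤ ytgt - y0)
    (y v : ℝ → ℝ) (hy0 : y 0 = y0) (hv0 : v 0 = v0)
    (T1 T2 : ℝ)
    (hT1 : T1 = (ytgt - y0 - v0 ^ 2 / (2 * bmin)) / v0)
    (hT2 : T2 = T1 + v0 / bmin)
    (hy : ∀ t ∈ Set.Icc (0 : ℝ) T2, HasDerivWithinAt y (v t) (Set.Icc 0 T2) t)
    (hv1 : ∀ t ∈ Set.Icc (0 : ℝ) T1, v t = v0)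
    (hv2 : ∀ t ∈ Set.Icc T1 T2, HasDerivWithinAt v (-bmin) (Set.Icc T1 T2) t) :
    v T2 = 0 ∧ y T2 = ytgt ∧
      ∀ t ∈ Set.Icc (0 : ℝ) T2, y t ≤ ytgt ∧ 0 ≤ v t ∧ v t ≤ v0 := by
  have hd2 : (0:ℝ) < 2 * bmin := by linarith
  have hT1nn : 0 ≤ T1 := by
    rw [hT1]
    apply div_nonneg _ hv.le
    have : 0 ≤ v0 ^ 2 / (2 * bmin) := by positivity
    linarith
  have hT12 : T1 ≤ T2 := by
    rw [hT2]; have : 0 ≤ v0 / bmin := by positivity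
    linarith
  have hT2nn : 0 ≤ T2 := le_trans hT1nn hT12
  -- value of y at T1 via the linear function
  have hyT1key : v0 * T1 = ytgt - y0 - v0 ^ 2 / (2 * bmin) := by
    rw [hT1]; field_simp
  -- y continuous on [0,T2]
  have hycont : ContinuousOn y (Icc 0 T2) := fun t ht => (hy t ht).continuousWithinAt
  have hvcont2 : ContinuousOn v (Icc T1 T2) := fun t ht => (hv2 t ht).continuousWithinAt
  -- Phase 1: y t = y0 + v0 * t on [0, T1]
  have hsub1 : Icc (0:ℝ) T1 ⊆ Icc 0 T2 := Icc_subset_Icc le_rfl hT12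
  have hphase1 : ∀ t ∈ Icc (0:ℝ) T1, y t = y0 + v0 * t := by
    apply eq_of_has_deriv_right_eq (f' := fun _ => v0)
    · intro x hx
      have hx' : x ∈ Icc (0:ℝ) T1 := ⟨hx.1, hx.2.le⟩
      have := (hy x (hsub1 hx')).mono_of_mem_nhdsWithin
        (Icc_mem_nhdsGE_of_mem ⟨hx.1, lt_of_lt_of_le hx.2 hT12⟩)
      rwa [hv1 x hx'] at this
    · intro x hx
      have := ((hasDerivAt_id x).const_mul v0 |>.const_add y0).hasDerivWithinAt (s := Ici x)
      simpa using this
    · exact hycont.mono hsub1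
    · exact (continuous_const.add (continuous_const.mul continuous_id)).continuousOn
    · simp [hy0]
  have hyT1 : y T1 = ytgt - v0 ^ 2 / (2 * bmin) := by
    have := hphase1 T1 ⟨hT1nn, le_rfl⟩
    rw [this, hyT1key]; ring
  -- Phase 2: v t = v0 - bmin * (t - T1) on [T1, T2]
  have hvT1 : v T1 = v0 := hv1 T1 ⟨hT1nn, le_rfl⟩
  have hphase2v : ∀ t ∈ Icc T1 T2, v t = v0 - bmin * (t - T1) := by
    apply eq_of_has_deriv_right_eq (f' := fun _ => -bmin)
    · intro x hx
      exact (hv2 x ⟨hx.1, hx.2.le⟩).mono_of_mem_nhdsWithin (Icc_mem_nhdsGE_of_mem ⟨hx.1, hx.2⟩)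
    · intro x hx
      have : HasDerivAt (fun t => v0 - bmin * (t - T1)) (-bmin) x := by
        have h1 : HasDerivAt (fun t : ℝ => t - T1) 1 x :=
          (hasDerivAt_id x).sub_const T1
        have := (h1.const_mul bmin).const_sub v0
        simpa using this
      exact this.hasDerivWithinAt
    · exact hvcont2
    · exact (continuous_const.sub (continuous_const.mul (continuous_id.sub continuous_const))).continuousOn
    · simp [hvT1]
  -- Phase 2: y t = y(T1) + v0(t-T1) - bmin(t-T1)²/2 on [T1, T2]
  have hsub2 : Icc T1 T2 ⊆ Icc 0 T2 := Icc_subset_Icc hT1nn le_rfl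
  have hphase2y : ∀ t ∈ Icc T1 T2,
      y t = y T1 + v0 * (t - T1) - bmin * (t - T1) ^ 2 / 2 := by
    apply eq_of_has_deriv_right_eq (f' := fun t => v0 - bmin * (t - T1))
    · intro x hx
      have hx' : x ∈ Icc T1 T2 := ⟨hx.1, hx.2.le⟩
      have := (hy x (hsub2 hx')).mono_of_mem_nhdsWithin
        (Icc_mem_nhdsGE_of_mem ⟨le_trans hT1nn hx.1, hx.2⟩)
      rwa [hphase2v x hx'] at this
    · intro x hx
      have h1 : HasDerivAt (fun t : ℝ => t - T1) 1 x := (hasDerivAt_id x).sub_const T1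
      have h2 : HasDerivAt (fun t : ℝ => y T1 + v0 * (t - T1) - bmin * (t - T1) ^ 2 / 2)
          (v0 - bmin * (x - T1)) x := by
        have ha := (h1.const_mul v0).const_add (y T1)
        have hsq : HasDerivAt (fun t : ℝ => (t - T1) ^ 2) (2 * (x - T1)) x := by
          simpa using (h1.fun_pow 2)
        have hc := (hsq.const_mul bmin).div_const 2
        have := ha.fun_sub hc
        rw [show v0 - bmin * (x - T1) = v0 * 1 - bmin * (2 * (x - T1)) / 2 by ring]; exact this
      exact h2.hasDerivWithinAt
    · exact hycont.mono hsub2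
    · fun_prop
    · simp
  have hT2mem : T2 ∈ Icc T1 T2 := ⟨hT12, le_rfl⟩
  have hvT2 : v T2 = 0 := by
    rw [hphase2v T2 hT2mem, hT2]
    field_simp; ring
  have hyT2 : y T2 = ytgt := by
    rw [hphase2y T2 hT2mem, hyT1, hT2]
    field_simp; ring
  refine ⟨hvT2, hyT2, fun t ht => ?_⟩
  rcases le_or_gt t T1 with h | h
  · have ht1 : t ∈ Icc (0:ℝ) T1 := ⟨ht.1, h⟩
    have hvt := hv1 t ht1
    have hyt := hphase1 t ht1
    refine ⟨?_, by rw [hvt]; exact hv.le, by rw [hvt]⟩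
    rw [hyt]
    have : v0 * t ≤ v0 * T1 := by nlinarith
    have hsq : 0 ≤ v0 ^ 2 / (2 * bmin) := by positivity
    nlinarith [hyT1key]
  · have ht2 : t ∈ Icc T1 T2 := ⟨h.le, ht.2⟩
    have hvt := hphase2v t ht2
    have hyt := hphase2y t ht2
    have hs1 : 0 ≤ t - T1 := by linarith
    have hs2 : t - T1 ≤ v0 / bmin := by
      have := ht.2; rw [hT2] at this; linarith
    have hs2' : bmin * (t - T1) ≤ v0 := by
      have := (le_div_iff₀ hb).mp hs2
      linarith
    constructor
    · rw [hyt, hyT1]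
      have key : v0 * (t - T1) - bmin * (t - T1) ^ 2 / 2 ≤ v0 ^ 2 / (2 * bmin) := by
        rw [le_div_iff₀ hd2]
        nlinarith [sq_nonneg (v0 - bmin * (t - T1))]
      linarith [key]
    constructor
    · rw [hvt]; linarith
    · rw [hvt]; nlinarith [mul_nonneg hb.le hs1]
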